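/- The Belnap–Dunn matrix M^BD is a simple matrix: for all truth values a₁, a₂ ∈ {t, f, b, n} with a₁ ≠ a₂, there is a unary matrix function f of M^BD (a composition of the interpretations of ¬, ∧, ∨ and projections) such that exactly one of f(a₁), f(a₂) is designated. -/

import Mathlib

namespace BD5

/-- The four truth values of Belnap-Dunn logic:
`t` (true), `f` (false), `b` (both true and false), `n` (neither true nor false). -/
inductive V4 : Type
  | t | f | b | n
deriving DecidableEq, Repr

namespace V4

/-- `a` lies above truth in the Belnap-Dunn bilattice (i.e. `a ∈ {t, b}`). -/
def hasT : V4 → Bool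
  | t => true
  | b => true
  | _ => false

/-- `a` lies above falsity in the Belnap-Dunn bilattice (i.e. `a ∈ {f, b}`). -/
def hasF : V4 → Bool
  | f => true
  | b => true
  | _ => false

def ofTF : Bool → Bool → V4
  | true, true => b
  | true, false => t
  | false, true => f
  | false, false => n

/-- Interpretation of ¬: swaps `t` and `f`, fixes `b` and `n`. -/
def neg4 : V4 → V4
  | t => f
  | f => t
  | b => b
  | n => n

/-- Interpretation of ∧: greatest lower bound in the lattice order on `V4`
with `f` least, `t` greatest, `b` and `n` incomparable. -/
def and4 (x y : V4) : V4 := ofTF (x.hasT && y.hasT) (x.hasF || y.hasF)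

/-- Interpretation of ∨: least upper bound in the lattice order on `V4`
with `f` least, `t` greatest, `b` and `n` incomparable. -/
def or4 (x y : V4) : V4 := ofTF (x.hasT || y.hasT) (x.hasF && y.hasF)

/-- Interpretation of →: `a₁ → a₂ = t` if `a₁ ∉ {t, b}`, and `a₂` otherwise. -/
def imp4 (x y : V4) : V4 := if x = t ∨ x = b then y else t

/-- The designated truth values: `t` and `b`. -/
def desig (x : V4) : Prop := x = t ∨ x = b

end V4

/-- The unary matrix functions of the Belnap-Dunn matrix `M^BD`: the unary
functions on the truth values obtainable by composition from the interpretations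
of ¬, ∧, ∨ and projections. -/
inductive IsUnaryMF : (V4 → V4) → Prop
  | id : IsUnaryMF (fun a => a)
  | neg {g : V4 → V4} : IsUnaryMF g → IsUnaryMF (fun a => V4.neg4 (g a))
  | and {g h : V4 → V4} : IsUnaryMF g → IsUnaryMF h →
      IsUnaryMF (fun a => V4.and4 (g a) (h a))
  | or {g h : V4 → V4} : IsUnaryMF g → IsUnaryMF h →
      IsUnaryMF (fun a => V4.or4 (g a) (h a))

instance : DecidablePred V4.desig := fun x =>
  decidable_of_iff (x = V4.t ∨ x = V4.b) Iff.rfl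

/-- the Belnap-Dunn matrix is simple: any two distinct truth
values are separated by a unary matrix function, i.e. for all `a₁ ≠ a₂` there
is a unary matrix function `g` such that exactly one of `g a₁`, `g a₂` is
designated. -/
theorem stmt5 :
    ∀ a₁ a₂ : V4, a₁ ≠ a₂ →
      ∃ g : V4 → V4, IsUnaryMF g ∧ Xor' (V4.desig (g a₁)) (V4.desig (g a₂)) := by
  have hid : IsUnaryMF (fun a => a) := IsUnaryMF.id
  have hand : IsUnaryMF (fun a => V4.and4 a (V4.neg4 a)) :=
    IsUnaryMF.and hid (IsUnaryMF.neg hid)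
  have hor : IsUnaryMF (fun a => V4.or4 a (V4.neg4 a)) :=
    IsUnaryMF.or hid (IsUnaryMF.neg hid)
  intro a₁ a₂ h
  cases a₁ <;> cases a₂ <;> first
    | exact absurd rfl h
    | exact ⟨_, hid, by unfold Xor'; decide⟩
    | exact ⟨_, hand, by unfold Xor'; decide⟩
    | exact ⟨_, hor, by unfold Xor'; decide⟩

end BD5
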